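/- Let n and r be natural numbers with 1 ≤ r ≤ n, and let L(U_{r,n}) be the finite lattice consisting of all subsets A of Fin n with |A| < r together with the full set Fin n, ordered by inclusion, with integer-valued Möbius function μ. Then the sum of |μ(A,B)| over all pairs (A,B) of elements of L(U_{r,n}) with A ⊆ B equals 1 + 2·Σ_{i=0}^{r−1} Σ_{k=0}^{r−i−1} C(n,i)·C(n−i−1,k), where C denotes the binomial coefficient. -/

import Mathlib

open Finset

lemma altsum (N m : ℕ) : ∑ j ∈ range (m+1), (-1:ℤ)^j * (N+1).choose j = (-1)^m * N.choose m := by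
  induction m with
  | zero => simp
  | succ m ih =>
    rw [sum_range_succ, ih, Nat.choose_succ_succ']
    push_cast
    ring

lemma pascalSum (N m : ℕ) : (∑ j ∈ range (m+1), (N+1).choose j) + N.choose m
    = 2 * ∑ k ∈ range (m+1), N.choose k := by
  induction m with
  | zero => simp
  | succ m ih =>
    rw [sum_range_succ, Nat.choose_succ_succ' N m, sum_range_succ N.choose]
    omega

lemma key2 {n r : ℕ} (p q : Finset (Fin n)) (hq : q.card < r) (hpq : p ⊆ q) :
    ∑ z ∈ (Finset.univ : Finset {A : Finset (Fin n) // A.card < r ∨ A = Finset.univ}).filter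
        (fun z => p ⊆ z.1 ∧ z.1 ⊆ q), (-1:ℤ)^((z.1 \ p).card)
    = ∑ T ∈ (q \ p).powerset, (-1:ℤ)^T.card := by
  refine sum_bij' (fun z _ => z.1 \ p)
    (fun T hT => ⟨T ∪ p, Or.inl (by
      have h1 : T ⊆ q \ p := mem_powerset.1 hT
      have h2 : T ∪ p ⊆ q := union_subset (h1.trans sdiff_subset) hpq
      exact lt_of_le_of_lt (card_le_card h2) hq)⟩)
    ?_ ?_ ?_ ?_ ?_
  · intro z hz
    simp only [mem_filter, mem_univ, true_and] at hz
    exact mem_powerset.2 (sdiff_subset_sdiff hz.2 le_rfl)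
  · intro T hT
    have h1 : T ⊆ q \ p := mem_powerset.1 hT
    simp only [mem_filter, mem_univ, true_and]
    exact ⟨subset_union_right, union_subset (h1.trans sdiff_subset) hpq⟩
  · intro z hz
    simp only [mem_filter, mem_univ, true_and] at hz
    exact Subtype.ext (sdiff_union_of_subset hz.1)
  · intro T hT
    have h1 : T ⊆ q \ p := mem_powerset.1 hT
    have hd : Disjoint T p := disjoint_of_subset_left h1 sdiff_disjoint
    simp only
    rw [union_sdiff_right, sdiff_eq_self_of_disjoint hd]
  · intro z hz; rfl

lemma keyT {n r : ℕ} (hrn : r ≤ n) (p : Finset (Fin n)) (hp : p.card < r) (f : ℕ → ℤ) :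
    ∑ z ∈ ((Finset.univ : Finset {A : Finset (Fin n) // A.card < r ∨ A = Finset.univ}).filter
        (fun z => p ⊆ z.1)).erase ⟨Finset.univ, Or.inr rfl⟩, f ((z.1 \ p).card)
    = ∑ j ∈ range (r - p.card), ((n - p.card).choose j : ℤ) * f j := by
  have hcu : (Finset.univ : Finset (Fin n)).card = n := by simp
  have hstep1 : ∑ z ∈ ((Finset.univ : Finset {A : Finset (Fin n) // A.card < r ∨ A = Finset.univ}).filter
        (fun z => p ⊆ z.1)).erase ⟨Finset.univ, Or.inr rfl⟩, f ((z.1 \ p).card)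
      = ∑ S ∈ (Finset.univ \ p).powerset.filter (fun S => S.card < r - p.card), f S.card := by
    refine sum_bij' (fun z _ => z.1 \ p)
      (fun T hT => ⟨T ∪ p, Or.inl (by
        simp only [mem_filter, mem_powerset] at hT
        have hd : Disjoint T p := disjoint_of_subset_left hT.1 sdiff_disjoint
        rw [card_union_of_disjoint hd]
        omega)⟩)
      ?_ ?_ ?_ ?_ ?_
    · intro z hz
      rw [mem_erase, mem_filter] at hz
      obtain ⟨hne, -, hpz⟩ := hz
      have hzu : z.1 ≠ Finset.univ := fun h => hne (Subtype.ext h)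
      have hzr : z.1.card < r := z.2.resolve_right hzu
      simp only [mem_filter, mem_powerset]
      constructor
      · exact sdiff_subset_sdiff (subset_univ _) le_rfl
      · rw [card_sdiff_of_subset hpz]
        have := card_le_card hpz
        omega
    · intro T hT
      simp only [mem_filter, mem_powerset] at hT
      have hd : Disjoint T p := disjoint_of_subset_left hT.1 sdiff_disjoint
      simp only [mem_erase, mem_filter]
      refine ⟨fun h => ?_, mem_univ _, subset_union_right⟩
      · have : (T ∪ p).card = (Finset.univ : Finset (Fin n)).card := by rw [Subtype.mk.injEq] at h; rw [h]
        rw [hcu, card_union_of_disjoint hd] at this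
        omega
    · intro z hz
      rw [mem_erase, mem_filter] at hz
      exact Subtype.ext (sdiff_union_of_subset hz.2.2)
    · intro T hT
      simp only [mem_filter, mem_powerset] at hT
      have hd : Disjoint T p := disjoint_of_subset_left hT.1 sdiff_disjoint
      simp only
      rw [union_sdiff_right, sdiff_eq_self_of_disjoint hd]
    · intro z hz; rfl
  rw [hstep1]
  have hfib := sum_fiberwise_of_maps_to (s := (Finset.univ \ p).powerset.filter (fun S => S.card < r - p.card)) (g := fun S => S.card) (t := range (r - p.card))
        (fun S hS => by rw [mem_range]; exact (mem_filter.1 hS).2) (fun S => f S.card)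
  rw [← hfib]
  refine sum_congr rfl fun j hj => ?_
  rw [mem_range] at hj
  have h1 : ((Finset.univ \ p).powerset.filter (fun S => S.card < r - p.card)).filter
      (fun S => S.card = j) = Finset.powersetCard j (Finset.univ \ p) := by
    rw [powersetCard_eq_filter, filter_filter]
    refine filter_congr fun S hS => ?_
    constructor
    · exact fun h => h.2
    · exact fun h => ⟨by omega, h⟩
  rw [h1]
  have h2 : ∀ S ∈ Finset.powersetCard j (Finset.univ \ p), f S.card = f j := by
    intro S hS
    rw [(mem_powersetCard.1 hS).2]
  rw [sum_congr rfl h2, sum_const, card_powersetCard, card_sdiff_of_subset (subset_univ p), hcu]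
  simp [mul_comm]

lemma mu_small {n r : ℕ}
    (μ : {A : Finset (Fin n) // A.card < r ∨ A = Finset.univ} →
         {A : Finset (Fin n) // A.card < r ∨ A = Finset.univ} → ℤ)
    (hrefl : ∀ p, μ p p = 1)
    (hsum : ∀ p q, p.1 ⊆ q.1 → p ≠ q →
      ∑ z ∈ Finset.univ.filter (fun z => p.1 ⊆ z.1 ∧ z.1 ⊆ q.1), μ p z = 0) :
    ∀ c : ℕ, ∀ q p : {A : Finset (Fin n) // A.card < r ∨ A = Finset.univ},
      q.1.card ≤ c → p.1 ⊆ q.1 → q.1.card < r → μ p q = (-1)^((q.1 \ p.1).card) := by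
  intro c
  induction c with
  | zero =>
    intro q p hc hpq hq
    have hq0 : q.1 = ∅ := card_eq_zero.1 (Nat.le_zero.1 hc)
    have hp0 : p.1 = ∅ := subset_empty.1 (hq0 ▸ hpq)
    have : p = q := Subtype.ext (hp0.trans hq0.symm)
    subst this
    simp [hrefl, sdiff_self]
  | succ c ih =>
    intro q p hc hpq hq
    by_cases hpq' : p = q
    · subst hpq'; simp [hrefl, sdiff_self]
    · have h0 := hsum p q hpq hpq'
      have hqmem : q ∈ Finset.univ.filter
          (fun z : {A : Finset (Fin n) // A.card < r ∨ A = Finset.univ} =>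
            p.1 ⊆ z.1 ∧ z.1 ⊆ q.1) := by
        simp only [mem_filter, mem_univ, true_and]
        exact ⟨hpq, subset_rfl⟩
      rw [← add_sum_erase _ _ hqmem] at h0
      have herase : ∀ z ∈ (Finset.univ.filter
          (fun z : {A : Finset (Fin n) // A.card < r ∨ A = Finset.univ} =>
            p.1 ⊆ z.1 ∧ z.1 ⊆ q.1)).erase q, μ p z = (-1)^((z.1 \ p.1).card) := by
        intro z hz
        rw [mem_erase, mem_filter] at hz
        obtain ⟨hzq, -, hpz, hzq'⟩ := hz
        have hss : z.1 ⊂ q.1 := lt_of_le_of_ne hzq' (fun h => hzq (Subtype.ext h))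
        have hlt := card_lt_card hss
        exact ih z p (by omega) hpz (by omega)
      rw [sum_congr rfl herase] at h0
      have htot := key2 (r := r) p.1 q.1 hq hpq
      have hnonempty : (q.1 \ p.1).Nonempty := by
        rw [nonempty_iff_ne_empty]
        intro h
        exact hpq' (Subtype.ext (subset_antisymm hpq (by
          intro x hx
          by_contra hxp
          exact absurd h (ne_empty_of_mem (mem_sdiff.2 ⟨hx, hxp⟩)))))
      rw [sum_powerset_neg_one_pow_card_of_nonempty hnonempty] at htot
      rw [← add_sum_erase _ _ hqmem] at htot
      linarith [htot, h0]

lemma mu_top {n r : ℕ} (hrn : r ≤ n)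
    (μ : {A : Finset (Fin n) // A.card < r ∨ A = Finset.univ} →
         {A : Finset (Fin n) // A.card < r ∨ A = Finset.univ} → ℤ)
    (hrefl : ∀ p, μ p p = 1)
    (hsum : ∀ p q, p.1 ⊆ q.1 → p ≠ q →
      ∑ z ∈ Finset.univ.filter (fun z => p.1 ⊆ z.1 ∧ z.1 ⊆ q.1), μ p z = 0)
    (p : {A : Finset (Fin n) // A.card < r ∨ A = Finset.univ}) (hp : p.1.card < r) :
    |μ p ⟨Finset.univ, Or.inr rfl⟩| = ((n - p.1.card - 1).choose (r - p.1.card - 1) : ℤ) := by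
  have hcu : (Finset.univ : Finset (Fin n)).card = n := by simp
  set top : {A : Finset (Fin n) // A.card < r ∨ A = Finset.univ} := ⟨Finset.univ, Or.inr rfl⟩
  have hpa := card_le_card (subset_univ p.1)
  rw [hcu] at hpa
  have hptop : p ≠ top := by
    intro h
    rw [h] at hp
    simp only [top, hcu] at hp
    omega
  have h0 := hsum p top (subset_univ _) hptop
  have hfeq : (Finset.univ.filter
      (fun z : {A : Finset (Fin n) // A.card < r ∨ A = Finset.univ} =>
        p.1 ⊆ z.1 ∧ z.1 ⊆ top.1))
      = Finset.univ.filter (fun z => p.1 ⊆ z.1) := by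
    refine filter_congr fun z _ => ?_
    simp [top, subset_univ]
  rw [hfeq] at h0
  have htopmem : top ∈ Finset.univ.filter
      (fun z : {A : Finset (Fin n) // A.card < r ∨ A = Finset.univ} => p.1 ⊆ z.1) := by
    simp [top, subset_univ]
    exact Subtype.coe_le_coe.1 (subset_univ _)
  rw [← add_sum_erase _ _ htopmem] at h0
  have herase : ∀ z ∈ (Finset.univ.filter
      (fun z : {A : Finset (Fin n) // A.card < r ∨ A = Finset.univ} =>
        p.1 ⊆ z.1)).erase top, μ p z = (fun j => (-1:ℤ)^j) ((z.1 \ p.1).card) := by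
    intro z hz
    rw [mem_erase, mem_filter] at hz
    obtain ⟨hzt, -, hpz⟩ := hz
    have hzu : z.1 ≠ Finset.univ := fun h => hzt (Subtype.ext h)
    have hzr : z.1.card < r := z.2.resolve_right hzu
    exact mu_small μ hrefl hsum z.1.card z p le_rfl hpz hzr
  rw [sum_congr rfl herase, keyT hrn p.1 hp (fun j => (-1:ℤ)^j)] at h0
  have hilt : p.1.card < n := by omega
  have hn1 : n - p.1.card = (n - p.1.card - 1) + 1 := by omega
  have hr1 : r - p.1.card = (r - p.1.card - 1) + 1 := by omega
  rw [hr1, hn1] at h0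
  have halt : ∑ j ∈ range ((r - p.1.card - 1) + 1),
      (((n - p.1.card - 1) + 1).choose j : ℤ) * (-1)^j
      = (-1)^(r - p.1.card - 1) * ((n - p.1.card - 1).choose (r - p.1.card - 1) : ℤ) := by
    rw [← altsum (n - p.1.card - 1) (r - p.1.card - 1)]
    exact sum_congr rfl fun j _ => by ring
  rw [halt] at h0
  have : μ p top = -((-1)^(r - p.1.card - 1) * ((n - p.1.card - 1).choose (r - p.1.card - 1) : ℤ)) := by
    linarith
  rw [this, abs_neg, abs_mul, abs_pow, abs_neg, abs_one, one_pow, one_mul, Int.abs_natCast]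

/-- Let `L(U_{r,n})` (for `1 ≤ r ≤ n`) be the lattice of flats of the rank `r` uniform
matroid on `n` elements, with integer-valued Möbius function `μ`.  The sum of `|μ(A,B)|`
over all pairs `A ⊆ B` of elements of `L(U_{r,n})` equals
`1 + 2·Σ_{i=0}^{r−1} Σ_{k=0}^{r−i−1} C(n,i)·C(n−i−1,k)`, the total number of faces of the
Folkman–Lawrence representation of the rank `r` uniform oriented matroid on `n` elements. -/
theorem mobius_uniform_flats_total_sum (n r : ℕ) (hr : 1 ≤ r) (hrn : r ≤ n)
    (μ : {A : Finset (Fin n) // A.card < r ∨ A = Finset.univ} →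
         {A : Finset (Fin n) // A.card < r ∨ A = Finset.univ} → ℤ)
    (hrefl : ∀ p, μ p p = 1)
    (hsum : ∀ p q, p.1 ⊆ q.1 → p ≠ q →
      ∑ z ∈ Finset.univ.filter (fun z => p.1 ⊆ z.1 ∧ z.1 ⊆ q.1), μ p z = 0) :
    ∑ A : {A : Finset (Fin n) // A.card < r ∨ A = Finset.univ},
        ∑ B ∈ Finset.univ.filter (fun B => A.1 ⊆ B.1), |μ A B| =
      1 + 2 * ∑ i ∈ Finset.range r, ∑ k ∈ Finset.range (r - i),
        (Nat.choose n i * Nat.choose (n - i - 1) k : ℤ) := by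
  classical
  have hcu : (Finset.univ : Finset (Fin n)).card = n := by simp
  set top : {A : Finset (Fin n) // A.card < r ∨ A = Finset.univ} :=
    ⟨Finset.univ, Or.inr rfl⟩ with htop
  set F : ℕ → ℤ := fun i =>
    ((n - i - 1).choose (r - i - 1) : ℤ) +
      ∑ j ∈ range (r - i), ((n - i).choose j : ℤ) * 1 with hF
  -- inner sum at top
  have hinnertop : ∑ B ∈ Finset.univ.filter
      (fun B : {A : Finset (Fin n) // A.card < r ∨ A = Finset.univ} => top.1 ⊆ B.1),
      |μ top B| = 1 := by
    have h1 : Finset.univ.filter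
        (fun B : {A : Finset (Fin n) // A.card < r ∨ A = Finset.univ} => top.1 ⊆ B.1)
        = {top} := by
      ext B
      simp only [mem_filter, mem_univ, true_and, mem_singleton]
      constructor
      · intro h
        exact Subtype.ext (univ_subset_iff.1 h)
      · intro h; rw [h]
    rw [h1, sum_singleton, hrefl, abs_one]
  -- inner sum at small A
  have hA : ∀ A ∈ (Finset.univ : Finset
      {A : Finset (Fin n) // A.card < r ∨ A = Finset.univ}).erase top,
      ∑ B ∈ Finset.univ.filter (fun B => A.1 ⊆ B.1), |μ A B| = F A.1.card := by
    intro A hA'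
    rw [mem_erase] at hA'
    have hAu : A.1 ≠ Finset.univ := fun h => hA'.1 (Subtype.ext h)
    have ha : A.1.card < r := A.2.resolve_right hAu
    have htopmem : top ∈ Finset.univ.filter
        (fun B : {A : Finset (Fin n) // A.card < r ∨ A = Finset.univ} => A.1 ⊆ B.1) := by
      simp [top, subset_univ]
      exact Subtype.coe_le_coe.1 (subset_univ _)
    rw [← add_sum_erase _ _ htopmem]
    have herase : ∀ B ∈ (Finset.univ.filter
        (fun B : {A : Finset (Fin n) // A.card < r ∨ A = Finset.univ} =>
          A.1 ⊆ B.1)).erase top, |μ A B| = (fun _ => (1:ℤ)) ((B.1 \ A.1).card) := by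
      intro B hB
      rw [mem_erase, mem_filter] at hB
      obtain ⟨hBt, -, hAB⟩ := hB
      have hBu : B.1 ≠ Finset.univ := fun h => hBt (Subtype.ext h)
      have hb : B.1.card < r := B.2.resolve_right hBu
      rw [mu_small μ hrefl hsum B.1.card B A le_rfl hAB hb]
      simp
    rw [sum_congr rfl herase, keyT hrn A.1 ha (fun _ => (1:ℤ)),
      mu_top hrn μ hrefl hsum A ha]
  rw [← add_sum_erase _ _ (mem_univ top), hinnertop, sum_congr rfl hA]
  -- count over A by cardinality
  have hempty : ((Finset.univ : Finset
      {A : Finset (Fin n) // A.card < r ∨ A = Finset.univ}).filter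
      (fun z => (∅ : Finset (Fin n)) ⊆ z.1)) = Finset.univ :=
    filter_true_of_mem fun _ _ => empty_subset _
  have hkeyA := keyT hrn (∅ : Finset (Fin n)) (by simp; omega) F
  rw [hempty] at hkeyA
  simp only [sdiff_empty, card_empty, Nat.sub_zero] at hkeyA
  rw [hkeyA]
  congr 1
  rw [mul_sum]
  refine sum_congr rfl fun i hi => ?_
  rw [mem_range] at hi
  have hin : i < n := lt_of_lt_of_le hi hrn
  have e1 : (r - i - 1) + 1 = r - i := by omega
  have e2 : (n - i - 1) + 1 = n - i := by omega
  have h := pascalSum (n - i - 1) (r - i - 1)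
  rw [e1, e2] at h
  have h' : ((n - i - 1).choose (r - i - 1) : ℤ) + ∑ j ∈ range (r - i), ((n - i).choose j : ℤ)
      = 2 * ∑ k ∈ range (r - i), ((n - i - 1).choose k : ℤ) := by
    rw [add_comm]
    exact_mod_cast h
  simp only [hF, mul_one]
  rw [h']
  rw [show ∑ k ∈ range (r - i), ((n.choose i : ℤ) * ((n - i - 1).choose k : ℤ))
      = (n.choose i : ℤ) * ∑ k ∈ range (r - i), ((n - i - 1).choose k : ℤ) from (mul_sum _ _ _).symm]
  ring
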